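/- Let n ≥ 2 be an integer. Then x₁(u,θ) tends to −∞ as (u,θ) tends to (cos(π/n), π/n) within the fundamental domain Ω_n⁰ = {(u,θ) : u > cos θ, 0 ≤ θ ≤ π/n}; that is, for every sequence (u_k, θ_k) in Ω_n⁰ converging to (cos(π/n), π/n), the sequence x₁(u_k, θ_k) tends to −∞. -/

import Mathlib

open Real Finset Filter

noncomputable def cT (k : ℤ) (x : ℝ) : ℝ := (Polynomial.Chebyshev.T ℝ k).eval x

noncomputable def cU (k : ℤ) (x : ℝ) : ℝ := (Polynomial.Chebyshev.U ℝ k).eval x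

noncomputable def x0 (n : ℕ) (u θ : ℝ) : ℝ :=
  Real.sin (n * θ) / (n * (cT n u - Real.cos (n * θ)))

noncomputable def x1 (n : ℕ) (u θ : ℝ) : ℝ :=
  -(cT ((n : ℤ) - 1) u * Real.sin θ + u * Real.sin (((n : ℝ) - 1) * θ)) /
      (n * (cT n u - Real.cos (n * θ))) +
    ((n : ℝ) - 1) / (n : ℝ) ^ 2 *
      ∑ j ∈ Finset.Icc 1 (n - 1),
        Real.log (u - Real.cos (θ - 2 * π * j / n)) * Real.sin (2 * π * j / n)

noncomputable def x2 (n : ℕ) (u θ : ℝ) : ℝ :=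
  (-(cT ((n : ℤ) - 1) u) * Real.cos θ + u * Real.cos (((n : ℝ) - 1) * θ)) /
      (n * (cT n u - Real.cos (n * θ))) +
    ((n : ℝ) - 1) / (n : ℝ) ^ 2 *
      ∑ j ∈ Finset.range n,
        Real.log (u - Real.cos (θ - 2 * π * j / n)) * Real.cos (2 * π * j / n)

def Omega (n : ℕ) : Set (ℝ × ℝ) :=
  {p | ∀ j < n, Real.cos (p.2 - 2 * π * j / n) < p.1}

set_option maxHeartbeats 1000000 in
open Topology in
lemma JM.key (n : ℕ) (hn : 2 ≤ n) (u θ a ε δ η : ℝ)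
    (hη : η = (1 - Real.cos (2*π/n))/4)
    (hε : ε = π - n*(θ+a)/2) (hδ : δ = n*(θ-a)/2)
    (hu : Real.cos a = u) (ha0 : 0 ≤ a) (haθ : a < θ) (hθn : θ ≤ π/n)
    (hεhalf : ε ≤ π/2)
    (hc1 : 1 - η ≤ Real.cos (((n:ℝ)-2)*(θ-a)/2))
    (hc2 : -(Real.cos (2*π/n) + η) ≤ Real.cos (((n:ℝ)-2)*(θ+a)/2))
    (harg : |u - Real.cos (θ - 2*π/n)| ≤ 1) :
    x1 n u θ ≤ -(η/n) * ε⁻¹ +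
      ((n:ℝ)-1)/(n:ℝ)^2 * ∑ j ∈ Finset.Ioc 1 (n-1),
        Real.log (u - Real.cos (θ - 2*π*j/n)) * Real.sin (2*π*j/n) := by
  have hπ := Real.pi_pos
  have hn0 : (0:ℝ) < n := by positivity
  have hn2 : (2:ℝ) ≤ n := by exact_mod_cast hn
  have hθ0 : 0 < θ := lt_of_le_of_lt ha0 haθ
  have haπn : a < π/n := lt_of_lt_of_le haθ hθn
  have hδpos : 0 < δ := by rw [hδ]; nlinarith
  have hδle : δ ≤ π/2 := by
    rw [hδ]
    have : (n:ℝ)*θ ≤ π := by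
      calc (n:ℝ)*θ ≤ n*(π/n) := by nlinarith
      _ = π := by field_simp
    nlinarith
  have hεpos : 0 < ε := by rw [hε]; nlinarith [mul_lt_mul_of_pos_left haπn hn0,
    mul_le_mul_of_nonneg_left hθn hn0.le, mul_div_cancel₀ π (ne_of_gt hn0)]
  have hδε : δ ≤ ε := by
    rw [hδ, hε]
    have : (n:ℝ)*θ ≤ π := by
      calc (n:ℝ)*θ ≤ n*(π/n) := by nlinarith
      _ = π := by field_simp
    nlinarith
  have hsd : 0 < Real.sin δ := Real.sin_pos_of_pos_of_lt_pi hδpos (by linarith)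
  have hse : 0 < Real.sin ε := Real.sin_pos_of_pos_of_lt_pi hεpos (by linarith)
  have hsde : Real.sin δ ≤ Real.sin ε :=
    Real.sin_le_sin_of_le_of_le_pi_div_two (by linarith) hεhalf hδε
  have hcoef1 : Real.cos (2*π/n) < 1 := by
    have h2πn : 2*π/n ≤ π := by rw [div_le_iff₀ hn0]; nlinarith
    have := Real.strictAntiOn_cos (Set.mem_Icc.2 ⟨le_refl 0, hπ.le⟩)
      (Set.mem_Icc.2 ⟨by positivity, h2πn⟩) (by positivity)
    simpa using this
  have hηpos : 0 < η := by rw [hη]; linarith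
  have hηle : η ≤ 1/2 := by
    have : -1 ≤ Real.cos (2*π/n) := Real.neg_one_le_cos _
    rw [hη]; linarith
  -- Chebyshev evaluations
  have hcT1 : cT (n:ℤ) u = Real.cos ((n:ℝ)*a) := by
    unfold cT; rw [← hu, Polynomial.Chebyshev.T_real_cos]; push_cast; ring_nf
  have hcT2 : cT ((n:ℤ)-1) u = Real.cos (((n:ℝ)-1)*a) := by
    unfold cT; rw [← hu, Polynomial.Chebyshev.T_real_cos]; push_cast; ring_nf
  -- denominator
  have hden : (n:ℝ) * (cT (n:ℤ) u - Real.cos ((n:ℝ)*θ)) = 2*n*Real.sin ε*Real.sin δ := by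
    rw [hcT1, Real.cos_sub_cos]
    rw [show ((n:ℝ)*a + (n:ℝ)*θ)/2 = π - ε by rw [hε]; ring,
      show ((n:ℝ)*a - (n:ℝ)*θ)/2 = -δ by rw [hδ]; ring,
      Real.sin_pi_sub, Real.sin_neg]
    ring
  have hseq : Real.sin ε = Real.sin ((n:ℝ)*(θ+a)/2) := by
    rw [show (n:ℝ)*(θ+a)/2 = π - ε by rw [hε]; ring, Real.sin_pi_sub]
  have hsdq : Real.sin δ = Real.sin ((n:ℝ)*(θ-a)/2) := by rw [hδ]
  -- numerator
  have E : ∀ X Y : ℝ, 2*(Real.sin X * Real.cos Y) = Real.sin (X+Y) + Real.sin (X-Y) := by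
    intro X Y; rw [Real.sin_add, Real.sin_sub]; ring
  have hnum : cT ((n:ℤ)-1) u * Real.sin θ + u * Real.sin (((n:ℝ)-1)*θ)
      = Real.sin ε * Real.cos (((n:ℝ)-2)*(θ-a)/2)
        + Real.sin δ * Real.cos (((n:ℝ)-2)*(θ+a)/2) := by
    rw [hcT2, ← hu, hseq, hsdq]
    have h1 := E θ (((n:ℝ)-1)*a)
    have h2 := E (((n:ℝ)-1)*θ) a
    have h3 := E ((n:ℝ)*(θ+a)/2) (((n:ℝ)-2)*(θ-a)/2)
    have h4 := E ((n:ℝ)*(θ-a)/2) (((n:ℝ)-2)*(θ+a)/2)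
    rw [show (n:ℝ)*(θ+a)/2 + ((n:ℝ)-2)*(θ-a)/2 = ((n:ℝ)-1)*θ + a by ring,
      show (n:ℝ)*(θ+a)/2 - ((n:ℝ)-2)*(θ-a)/2 = θ + ((n:ℝ)-1)*a by ring] at h3
    rw [show (n:ℝ)*(θ-a)/2 + ((n:ℝ)-2)*(θ+a)/2 = ((n:ℝ)-1)*θ - a by ring,
      show (n:ℝ)*(θ-a)/2 - ((n:ℝ)-2)*(θ+a)/2 = θ - ((n:ℝ)-1)*a by ring] at h4
    linear_combination (h1 + h2 - h3 - h4) / 2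
  -- fraction bound
  have hNu : 2*η*Real.sin δ ≤ Real.sin ε * Real.cos (((n:ℝ)-2)*(θ-a)/2)
      + Real.sin δ * Real.cos (((n:ℝ)-2)*(θ+a)/2) := by
    have hkey : Real.sin δ * (1 - Real.cos (2*π/n) - 4*η) = 0 := by rw [hη]; ring
    have hA := mul_le_mul_of_nonneg_left hc1 hse.le
    have hB := mul_le_mul_of_nonneg_left hc2 hsd.le
    have hC := mul_le_mul_of_nonneg_right hsde (by linarith : (0:ℝ) ≤ 1 - η)
    nlinarith [hA, hB, hC, hkey]
  have hfrac : -(Real.sin ε * Real.cos (((n:ℝ)-2)*(θ-a)/2)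
      + Real.sin δ * Real.cos (((n:ℝ)-2)*(θ+a)/2)) / (2*n*Real.sin ε*Real.sin δ)
      ≤ -(η/n) * ε⁻¹ := by
    have hd : (0:ℝ) < 2*n*Real.sin ε*Real.sin δ := by positivity
    have step1 : -(Real.sin ε * Real.cos (((n:ℝ)-2)*(θ-a)/2)
        + Real.sin δ * Real.cos (((n:ℝ)-2)*(θ+a)/2)) / (2*n*Real.sin ε*Real.sin δ)
        ≤ -(η/n) * (Real.sin ε)⁻¹ := by
      rw [div_le_iff₀ hd]
      have : -(η/n) * (Real.sin ε)⁻¹ * (2*n*Real.sin ε*Real.sin δ) = -(2*η*Real.sin δ) := by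
        field_simp
      rw [this]; linarith
    have step2 : -(η/n) * (Real.sin ε)⁻¹ ≤ -(η/n) * ε⁻¹ := by
      have hsle : Real.sin ε ≤ ε := Real.sin_le hεpos.le
      have : ε⁻¹ ≤ (Real.sin ε)⁻¹ := by
        apply inv_anti₀ hse hsle
      nlinarith [div_pos hηpos hn0]
    linarith
  -- sum split
  have h1n : 1 ≤ n - 1 := by omega
  have hsplit : ∑ j ∈ Finset.Icc 1 (n-1),
        Real.log (u - Real.cos (θ - 2*π*j/n)) * Real.sin (2*π*j/n)
      = Real.log (u - Real.cos (θ - 2*π*1/n)) * Real.sin (2*π*1/n)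
        + ∑ j ∈ Finset.Ioc 1 (n-1),
          Real.log (u - Real.cos (θ - 2*π*j/n)) * Real.sin (2*π*j/n) := by
    rw [← Finset.Ioc_insert_left h1n, Finset.sum_insert (by simp)]
    norm_num
  have hf1 : Real.log (u - Real.cos (θ - 2*π*(1:ℕ)/n)) * Real.sin (2*π*(1:ℕ)/n) ≤ 0 := by
    push_cast
    apply mul_nonpos_of_nonpos_of_nonneg
    · rw [show θ - 2*π*1/n = θ - 2*π/n by ring]
      rw [← Real.log_abs]
      exact Real.log_nonpos (abs_nonneg _) harg
    · apply Real.sin_nonneg_of_nonneg_of_le_pi (by positivity)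
      rw [show 2*π*1/n = 2*π/n by ring, div_le_iff₀ hn0]; nlinarith
  -- assemble
  have hcoefpos : (0:ℝ) ≤ ((n:ℝ)-1)/(n:ℝ)^2 := div_nonneg (by linarith) (by positivity)
  have hCf1 := mul_nonpos_of_nonneg_of_nonpos hcoefpos hf1
  have hx1eq : x1 n u θ
      = -(Real.sin ε * Real.cos (((n:ℝ)-2)*(θ-a)/2)
          + Real.sin δ * Real.cos (((n:ℝ)-2)*(θ+a)/2)) / (2*n*Real.sin ε*Real.sin δ)
        + ((n:ℝ)-1)/(n:ℝ)^2 * (Real.log (u - Real.cos (θ - 2*π*(1:ℕ)/n)) * Real.sin (2*π*(1:ℕ)/n))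
        + ((n:ℝ)-1)/(n:ℝ)^2 * ∑ j ∈ Finset.Ioc 1 (n-1),
            Real.log (u - Real.cos (θ - 2*π*j/n)) * Real.sin (2*π*j/n) := by
    unfold x1
    rw [hden, hnum, hsplit]
    push_cast
    ring
  rw [hx1eq]
  linarith [hfrac, hCf1]

lemma JM.coslt (n j : ℕ) (hn : 2 ≤ n) (hj1 : 1 < j) (hj2 : j ≤ n-1) :
    Real.cos (π/n - 2*π*j/n) < Real.cos (π/n) := by
  have hπ := Real.pi_pos
  have hn0 : (0:ℝ) < n := by positivity
  have hn2 : (2:ℝ) ≤ n := by exact_mod_cast hn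
  have hjr : (j:ℝ) ≤ (n:ℝ) - 1 := by
    have h : (j:ℝ) ≤ ((n-1:ℕ):ℝ) := by exact_mod_cast hj2
    rwa [Nat.cast_sub (by omega), Nat.cast_one] at h
  have hj2r : (2:ℝ) ≤ (j:ℝ) := by exact_mod_cast hj1
  have hπn_pos : 0 < π/n := by positivity
  have hπnπ : π/n ≤ π := by rw [div_le_iff₀ hn0]; nlinarith
  have hxval : π/(n:ℝ) - 2*π*(j:ℝ)/n = -((2*(j:ℝ)-1)*(π/n)) := by field_simp; ring
  rw [hxval, Real.cos_neg]
  have hx_lb : 3*(π/n) ≤ (2*(j:ℝ)-1)*(π/n) := by nlinarith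
  have hx_ub : (2*(j:ℝ)-1)*(π/n) ≤ 2*π - 3*(π/n) := by
    have : ((2*(j:ℝ)-1) + 3)*(π/n) ≤ 2*(n:ℝ)*(π/n) := by nlinarith
    have h2 : 2*(n:ℝ)*(π/n) = 2*π := by field_simp
    nlinarith
  rcases le_or_gt ((2*(j:ℝ)-1)*(π/n)) π with h | h
  · exact Real.strictAntiOn_cos ⟨hπn_pos.le, hπnπ⟩ ⟨by nlinarith, h⟩ (by nlinarith)
  · rw [← Real.cos_two_pi_sub]
    exact Real.strictAntiOn_cos ⟨hπn_pos.le, hπnπ⟩ ⟨by nlinarith, by nlinarith⟩ (by nlinarith)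
set_option maxHeartbeats 1000000 in
open Topology in
theorem stmt12 (n : ℕ) (hn : 2 ≤ n)
    (us θs : ℕ → ℝ)
    (hmem : ∀ k, Real.cos (θs k) < us k ∧ 0 ≤ θs k ∧ θs k ≤ π / n)
    (hconv : Filter.Tendsto (fun k => (us k, θs k)) Filter.atTop
      (nhds (Real.cos (π / n), π / n))) :
    Filter.Tendsto (fun k => x1 n (us k) (θs k)) Filter.atTop Filter.atBot := by
  have hπ := Real.pi_pos
  have hn2 : (2:ℝ) ≤ n := by exact_mod_cast hn
  have hn0 : (0:ℝ) < n := by linarith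
  have hπn_pos : 0 < π/(n:ℝ) := by positivity
  have hπn_le : π/(n:ℝ) ≤ π := by rw [div_le_iff₀ hn0]; nlinarith
  have hπn_lt : π/(n:ℝ) < π := by rw [div_lt_iff₀ hn0]; nlinarith
  -- component limits
  have hus : Tendsto us atTop (𝓝 (Real.cos (π/n))) :=
    (Continuous.tendsto continuous_fst _).comp hconv
  have hθt : Tendsto θs atTop (𝓝 (π/(n:ℝ))) :=
    (Continuous.tendsto continuous_snd _).comp hconv
  set a : ℕ → ℝ := fun k => Real.arccos (us k) with ha_def
  have hat : Tendsto a atTop (𝓝 (π/(n:ℝ))) := by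
    have h := (Real.continuous_arccos.tendsto _).comp hus
    simpa [ha_def, Function.comp_def, Real.arccos_cos hπn_pos.le hπn_le] using h
  set η : ℝ := (1 - Real.cos (2*π/n))/4 with hη_def
  have hcoef1 : Real.cos (2*π/(n:ℝ)) < 1 := by
    have h2πn : 2*π/(n:ℝ) ≤ π := by rw [div_le_iff₀ hn0]; nlinarith
    have := Real.strictAntiOn_cos (Set.mem_Icc.2 ⟨le_refl 0, hπ.le⟩)
      (Set.mem_Icc.2 ⟨by positivity, h2πn⟩) (by positivity)
    simpa using this
  have hηpos : 0 < η := by rw [hη_def]; linarith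
  set ε : ℕ → ℝ := fun k => π - n*(θs k + a k)/2 with hε_def
  have hεt : Tendsto ε atTop (𝓝 0) := by
    have h : Tendsto (fun k => π - (n:ℝ)*(θs k + a k)/2) atTop
        (𝓝 (π - (n:ℝ)*(π/n + π/n)/2)) :=
      tendsto_const_nhds.sub (((hθt.add hat).const_mul (n:ℝ)).div_const 2)
    have hval : π - (n:ℝ)*(π/n + π/n)/2 = 0 := by field_simp; ring
    rwa [hval] at h
  -- eventual facts
  have hopen : ∀ᶠ k in atTop, Real.cos (a k) = us k := by
    have hcm1 : -1 < Real.cos (π/(n:ℝ)) := by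
      have := Real.strictAntiOn_cos (Set.mem_Icc.2 ⟨hπn_pos.le, hπn_le⟩)
        (Set.mem_Icc.2 ⟨hπ.le, le_refl π⟩) hπn_lt
      simpa using this
    have hc1 : Real.cos (π/(n:ℝ)) < 1 := by
      have := Real.strictAntiOn_cos (Set.mem_Icc.2 ⟨le_refl 0, hπ.le⟩)
        (Set.mem_Icc.2 ⟨hπn_pos.le, hπn_le⟩) hπn_pos
      simpa using this
    filter_upwards [hus.eventually (eventually_gt_nhds hcm1),
      hus.eventually (eventually_lt_nhds hc1)] with k h1 h2
    exact Real.cos_arccos h1.le h2.le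
  have haθ : ∀ᶠ k in atTop, a k < θs k := by
    filter_upwards [hopen] with k hk
    by_contra h
    push_neg at h
    have := Real.cos_le_cos_of_nonneg_of_le_pi (hmem k).2.1 (Real.arccos_le_pi _) h
    rw [hk] at this
    exact absurd (hmem k).1 (not_lt.2 this)
  have hεhalf : ∀ᶠ k in atTop, ε k ≤ π/2 := hεt.eventually (eventually_le_nhds (by positivity))
  have hc1t : Tendsto (fun k => Real.cos (((n:ℝ)-2)*(θs k - a k)/2)) atTop (𝓝 1) := by
    have h := (Real.continuous_cos.tendsto _).comp
      (((hθt.sub hat).const_mul ((n:ℝ)-2)).div_const 2)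
    simpa [Function.comp_def] using h
  have hP4 : ∀ᶠ k in atTop, 1 - η ≤ Real.cos (((n:ℝ)-2)*(θs k - a k)/2) :=
    hc1t.eventually (eventually_ge_nhds (by linarith))
  have hc2t : Tendsto (fun k => Real.cos (((n:ℝ)-2)*(θs k + a k)/2)) atTop
      (𝓝 (-(Real.cos (2*π/n)))) := by
    have h := (Real.continuous_cos.tendsto (((n:ℝ)-2)*(π/n + π/n)/2)).comp
      (((hθt.add hat).const_mul ((n:ℝ)-2)).div_const 2)
    have hval : ((n:ℝ)-2)*(π/n + π/n)/2 = π - 2*π/n := by field_simp; ring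
    rw [hval, Real.cos_pi_sub] at h
    exact h
  have hP5 : ∀ᶠ k in atTop, -(Real.cos (2*π/(n:ℝ)) + η) ≤ Real.cos (((n:ℝ)-2)*(θs k + a k)/2) :=
    hc2t.eventually (eventually_ge_nhds (by linarith))
  have hargt : Tendsto (fun k => us k - Real.cos (θs k - 2*π/n)) atTop (𝓝 0) := by
    have h := hus.sub ((Real.continuous_cos.tendsto (π/(n:ℝ) - 2*π/n)).comp
      (hθt.sub_const (2*π/n)))
    have hval : Real.cos (π/(n:ℝ)) - Real.cos (π/(n:ℝ) - 2*π/n) = 0 := by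
      rw [show π/(n:ℝ) - 2*π/n = -(π/n) by ring, Real.cos_neg]; ring
    rwa [hval] at h
  have hP6 : ∀ᶠ k in atTop, |us k - Real.cos (θs k - 2*π/(n:ℝ))| ≤ 1 := by
    have := hargt.abs
    rw [abs_zero] at this
    exact this.eventually (eventually_le_nhds (by norm_num))
  have hεpos : ∀ᶠ k in atTop, 0 < ε k := by
    filter_upwards [haθ] with k hk
    have h1 : a k < π/(n:ℝ) := lt_of_lt_of_le hk (hmem k).2.2
    have h2 : θs k ≤ π/(n:ℝ) := (hmem k).2.2
    have h3 : (n:ℝ)*(π/n) = π := by field_simp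
    simp only [hε_def]
    nlinarith
  -- limit of the regular part of the log sum
  have hRt : Tendsto (fun k => ∑ j ∈ Finset.Ioc 1 (n-1),
      Real.log (us k - Real.cos (θs k - 2*π*j/n)) * Real.sin (2*π*j/n)) atTop
      (𝓝 (∑ j ∈ Finset.Ioc 1 (n-1),
      Real.log (Real.cos (π/n) - Real.cos (π/(n:ℝ) - 2*π*j/n)) * Real.sin (2*π*j/n))) := by
    apply tendsto_finset_sum
    intro j hj
    obtain ⟨hj1, hj2⟩ := Finset.mem_Ioc.1 hj
    have hLj : 0 < Real.cos (π/(n:ℝ)) - Real.cos (π/(n:ℝ) - 2*π*j/n) :=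
      sub_pos.2 (JM.coslt n j hn hj1 hj2)
    have hinner : Tendsto (fun k => us k - Real.cos (θs k - 2*π*j/n)) atTop
        (𝓝 (Real.cos (π/(n:ℝ)) - Real.cos (π/(n:ℝ) - 2*π*j/n))) :=
      hus.sub ((Real.continuous_cos.tendsto _).comp (hθt.sub_const _))
    exact ((Real.continuousAt_log (ne_of_gt hLj)).tendsto.comp hinner).mul_const _
  -- dominating function tends to atBot
  have hinv : Tendsto (fun k => (ε k)⁻¹) atTop atTop :=
    tendsto_inv_nhdsGT_zero.comp
      (tendsto_nhdsWithin_of_tendsto_nhds_of_eventually_within _ hεt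
        (hεpos.mono fun k hk => Set.mem_Ioi.2 hk))
  have hbot : Tendsto (fun k => -(η/(n:ℝ)) * (ε k)⁻¹) atTop atBot :=
    (tendsto_const_mul_atBot_of_neg (neg_lt_zero.2 (div_pos hηpos hn0))).2 hinv
  have hGbot : Tendsto (fun k => ((n:ℝ)-1)/(n:ℝ)^2 * (∑ j ∈ Finset.Ioc 1 (n-1),
      Real.log (us k - Real.cos (θs k - 2*π*j/n)) * Real.sin (2*π*j/n))
      + -(η/(n:ℝ)) * (ε k)⁻¹) atTop atBot :=
    ((hRt.const_mul _)).add_atBot hbot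
  apply tendsto_atBot_mono' atTop _ hGbot
  filter_upwards [hopen, haθ, hεhalf, hP4, hP5, hP6] with k h1 h2 h3 h4 h5 h6
  have hkey := JM.key n hn (us k) (θs k) (a k) (ε k) ((n:ℝ)*(θs k - a k)/2) η hη_def rfl rfl h1
    (Real.arccos_nonneg _) h2 (hmem k).2.2 h3 h4 h5 h6
  linarith [hkey]
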